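/- Let (X,ρ) and (X',ρ') be separable metric spaces, q ∈ ℝ, μ a Borel probability measure on X, ν a Borel probability measure on X', and h, h' Hausdorff functions. Let E ⊆ X and F ⊆ X', and assume that either W^{q,h}_μ(E) = H^{q,h}_μ(E) or W^{q,h'}_ν(F) = H^{q,h'}_ν(F). Then H^{q,h×h'}_{μ×ν}(E×F) ≥ H^{q,h}_μ(E) · H^{q,h'}_ν(F), where the product space X×X' carries the metric max(ρ,ρ') and H^{q,h×h'}_{μ×ν} is constructed from the premeasure ξ_{h×h'} on X×X'. -/

import Mathlib

open Metric MeasureTheory Set Filter TopologicalSpace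
open scoped ENNReal NNReal Classical

noncomputable section

/-- `x ^ q` for extended nonnegative reals, with the paper's convention
`0 ^ q = ∞` for `q ≤ 0`. -/
def epow (x : ℝ≥0∞) (q : ℝ) : ℝ≥0∞ := if x = 0 ∧ q ≤ 0 then ∞ else x ^ q

variable {X X' : Type*}

section Defs

variable [MetricSpace X] [MetricSpace X']

/-- A premeasure on a metric space: an increasing `[0,∞]`-valued function on the family of
closed balls, vanishing on the empty set. -/
def IsPremeasure (ξ : Set X → ℝ≥0∞) : Prop :=
  ξ ∅ = 0 ∧ ∀ (x : X) (r : ℝ) (x' : X) (r' : ℝ),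
    closedBall x r ⊆ closedBall x' r' → ξ (closedBall x r) ≤ ξ (closedBall x' r')

/-- The doubling ("blanketed") condition defining the class `Φ_D` of premeasures:
`ξ(B(x,2r)) ≤ K ξ(B(x,r))` for some constant `K > 1`, all `x` and all `0 < r ≤ 1`. -/
def PremeasureBlanketed (ξ : Set X → ℝ≥0∞) : Prop :=
  ∃ K : ℝ≥0, 1 < K ∧ ∀ (x : X) (r : ℝ), 0 < r → r ≤ 1 →
    ξ (closedBall x (2 * r)) ≤ (K : ℝ≥0∞) * ξ (closedBall x r)

variable [MeasurableSpace X] [MeasurableSpace X']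

/-- The support of a Borel measure on a metric space. -/
def measSupport (μ : Measure X) : Set X := {x : X | ∀ r : ℝ, 0 < r → 0 < μ (ball x r)}

/-- A blanketed (doubling) measure: for some `a > 1`,
`limsup_{r → 0⁺} sup_{x ∈ supp μ} μ(B(x,ar)) / μ(B(x,r)) < ∞`. -/
def MeasureBlanketed (μ : Measure X) : Prop :=
  ∃ a : ℝ, 1 < a ∧
    limsup (fun r : ℝ => ⨆ x ∈ measSupport μ,
      μ (closedBall x (a * r)) / μ (closedBall x r)) (nhdsWithin 0 (Ioi 0)) < ∞

/-- The quantity `μ(B)^q ξ(B)` attached to a ball `B`. -/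
def ballWeight (μ : Measure X) (q : ℝ) (ξ : Set X → ℝ≥0∞) (B : Set X) : ℝ≥0∞ :=
  epow (μ B) q * ξ B

/-- A centered `δ`-cover of `E`: countably many closed balls centered in `E`, of diameters
at most `2δ`, covering `E`. -/
def IsCenteredCover (E : Set X) (δ : ℝ) (c : ℕ → X) (r : ℕ → ℝ) : Prop :=
  (∀ i, c i ∈ E) ∧ (∀ i, diam (closedBall (c i) (r i)) ≤ 2 * δ) ∧
    E ⊆ ⋃ i, closedBall (c i) (r i)

/-- The pre-Hausdorff quantity `H^{q,ξ}_{μ,δ}(E)`. -/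
def Hd (μ : Measure X) (q : ℝ) (ξ : Set X → ℝ≥0∞) (δ : ℝ) (E : Set X) : ℝ≥0∞ :=
  if E = ∅ then 0 else
    ⨅ (c : ℕ → X) (r : ℕ → ℝ) (_ : IsCenteredCover E δ c r),
      ∑' i, ballWeight μ q ξ (closedBall (c i) (r i))

/-- `H^{q,ξ}_{μ,0}(E) = sup_{δ > 0} H^{q,ξ}_{μ,δ}(E)`. -/
def H0 (μ : Measure X) (q : ℝ) (ξ : Set X → ℝ≥0∞) (E : Set X) : ℝ≥0∞ :=
  ⨆ (δ : ℝ) (_ : 0 < δ), Hd μ q ξ δ E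

/-- The generalized Hausdorff measure `H^{q,ξ}_μ(E) = sup_{F ⊆ E} H^{q,ξ}_{μ,0}(F)`. -/
def HM (μ : Measure X) (q : ℝ) (ξ : Set X → ℝ≥0∞) (E : Set X) : ℝ≥0∞ :=
  ⨆ (F : Set X) (_ : F ⊆ E), H0 μ q ξ F

/-- A weighted and centered `δ`-cover of `E`: countably many pairs `(w i, B i)` of nonnegative
weights and closed balls centered in `E` of diameters at most `2δ`, with
`Σ {w i : x ∈ B i} ≥ 1` for every `x ∈ E`. -/
def IsWeightedCover (E : Set X) (δ : ℝ) (w : ℕ → ℝ≥0) (c : ℕ → X) (r : ℕ → ℝ) : Prop :=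
  (∀ i, c i ∈ E) ∧ (∀ i, diam (closedBall (c i) (r i)) ≤ 2 * δ) ∧
    ∀ x ∈ E, 1 ≤ ∑' i, (if x ∈ closedBall (c i) (r i) then (w i : ℝ≥0∞) else 0)

/-- The pre-weighted-Hausdorff quantity `W^{q,ξ}_{μ,δ}(E)`. -/
def Wd (μ : Measure X) (q : ℝ) (ξ : Set X → ℝ≥0∞) (δ : ℝ) (E : Set X) : ℝ≥0∞ :=
  if E = ∅ then 0 else
    ⨅ (w : ℕ → ℝ≥0) (c : ℕ → X) (r : ℕ → ℝ) (_ : IsWeightedCover E δ w c r),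
      ∑' i, (w i : ℝ≥0∞) * ballWeight μ q ξ (closedBall (c i) (r i))

/-- `W^{q,ξ}_{μ,0}(E) = sup_{δ > 0} W^{q,ξ}_{μ,δ}(E)`. -/
def W0 (μ : Measure X) (q : ℝ) (ξ : Set X → ℝ≥0∞) (E : Set X) : ℝ≥0∞ :=
  ⨆ (δ : ℝ) (_ : 0 < δ), Wd μ q ξ δ E

/-- The weighted generalized Hausdorff measure `W^{q,ξ}_μ(E) = sup_{F ⊆ E} W^{q,ξ}_{μ,0}(F)`. -/
def WM (μ : Measure X) (q : ℝ) (ξ : Set X → ℝ≥0∞) (E : Set X) : ℝ≥0∞ :=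
  ⨆ (F : Set X) (_ : F ⊆ E), W0 μ q ξ F

/-- Hypothesis (H) for `(X, ξ, μ)`: for every `ε > 0`, `X` can be covered by countably many
closed balls of diameters `< ε` on which `μ(B)^q ξ(B)` is finite. -/
def HypH (μ : Measure X) (q : ℝ) (ξ : Set X → ℝ≥0∞) : Prop :=
  ∀ ε : ℝ, 0 < ε → ∃ (c : ℕ → X) (r : ℕ → ℝ),
    (univ : Set X) ⊆ (⋃ i, closedBall (c i) (r i)) ∧
    (∀ i, diam (closedBall (c i) (r i)) < ε) ∧
    ∀ i, ballWeight μ q ξ (closedBall (c i) (r i)) < ∞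

/-- The product premeasure `ξ₀(B × B') = ξ(B) ξ'(B')` on the product space (whose closed balls
are exactly the products `B(x,r) × B(x',r)`), with the convention `0 ⬝ ∞ = ∞ ⬝ 0 = 0`. -/
def prodPre (ξ : Set X → ℝ≥0∞) (ξ' : Set X' → ℝ≥0∞) : Set (X × X') → ℝ≥0∞ :=
  fun S => ξ (Prod.fst '' S) * ξ' (Prod.snd '' S)

/-- Two sets are (positively) separated: `inf {ρ(x,y) : x ∈ E, y ∈ F} > 0`. -/
def SepSets (E F : Set X) : Prop := 0 < ⨅ x ∈ E, ⨅ y ∈ F, edist x y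

/-- The upper `(q,ξ)`-density of `ν` at `x` with respect to `μ`:
`limsup_{r → 0⁺} ν(B(x,r)) / (μ(B(x,r))^q ξ(B(x,r)))`. -/
def upperDensity (μ : Measure X) (q : ℝ) (ξ : Set X → ℝ≥0∞) (x : X) (ν : Measure X) : ℝ≥0∞ :=
  limsup (fun r : ℝ => ν (closedBall x r) / ballWeight μ q ξ (closedBall x r))
    (nhdsWithin 0 (Ioi 0))

/-- A Hausdorff function: right continuous, monotone increasing `h : [0,∞] → [0,∞]` with
`h(0) = 0` and `h(r) > 0` for `r > 0`. -/
def IsHausdorffFunction (h : ℝ≥0∞ → ℝ≥0∞) : Prop :=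
  Monotone h ∧ h 0 = 0 ∧ (∀ r : ℝ≥0∞, 0 < r → 0 < h r) ∧
    ∀ r : ℝ≥0∞, ContinuousWithinAt h (Ici r) r

/-- The premeasure `ξ_h` induced by a Hausdorff function: `ξ_h(B) = h(diam B)` for `B ≠ ∅`,
`ξ_h(∅) = 0`. -/
def hausPre (h : ℝ≥0∞ → ℝ≥0∞) : Set X → ℝ≥0∞ :=
  fun B => if B = ∅ then 0 else h (EMetric.diam B)

end Defs

section Thms

variable [MetricSpace X] [SeparableSpace X] [MeasurableSpace X] [BorelSpace X]
variable [MetricSpace X'] [SeparableSpace X'] [MeasurableSpace X'] [BorelSpace X']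

/-! ### Auxiliary lemmas -/

lemma aux_mul_le {a b c : ℝ≥0∞}
    (H : ∀ r : ℝ≥0, 0 < r → (r : ℝ≥0∞) < b → a * r ≤ c) : a * b ≤ c := by
  rcases eq_or_ne b 0 with rfl | hb
  · simp
  · have hb' : b ≤ ⨆ (r : {r : ℝ≥0 // 0 < r ∧ (r : ℝ≥0∞) < b}), (r.1 : ℝ≥0∞) := by
      refine ENNReal.le_of_forall_nnreal_lt fun s hs => ?_
      rcases eq_or_ne s 0 with rfl | hs0
      · simpa using zero_le _
      · exact le_iSup (fun r : {r : ℝ≥0 // 0 < r ∧ (r : ℝ≥0∞) < b} => (r.1 : ℝ≥0∞))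
          ⟨s, pos_iff_ne_zero.mpr hs0, hs⟩
    calc a * b ≤ a * ⨆ (r : {r : ℝ≥0 // 0 < r ∧ (r : ℝ≥0∞) < b}), (r.1 : ℝ≥0∞) :=
        mul_le_mul_right hb' a
      _ = ⨆ (r : {r : ℝ≥0 // 0 < r ∧ (r : ℝ≥0∞) < b}), a * (r.1 : ℝ≥0∞) :=
        ENNReal.mul_iSup _ _
      _ ≤ c := iSup_le fun r => H r.1 r.2.1 r.2.2

lemma aux_mul_le' {a b c : ℝ≥0∞}
    (H : ∀ r : ℝ≥0, 0 < r → (r : ℝ≥0∞) < a → (r : ℝ≥0∞) * b ≤ c) : a * b ≤ c := by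
  rw [mul_comm]
  exact aux_mul_le fun r h1 h2 => by rw [mul_comm]; exact H r h1 h2

lemma epow_ne_zero_of_ne_top {q : ℝ} (hq : q ≤ 0) {b : ℝ≥0∞} (hb : b ≠ ⊤) : epow b q ≠ 0 := by
  rw [epow]
  split_ifs with hcond
  · exact ENNReal.top_ne_zero
  · have hb0 : b ≠ 0 := fun h0 => hcond ⟨h0, hq⟩
    rw [Ne, ENNReal.rpow_eq_zero_iff]
    push_neg
    exact ⟨fun h0 => absurd h0 hb0, fun htop => absurd htop hb⟩

lemma epow_mul_eq (q : ℝ) {a b : ℝ≥0∞} (ha : a ≠ ⊤) (hb : b ≠ ⊤) :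
    epow (a * b) q = epow a q * epow b q := by
  have key : ∀ {x y : ℝ≥0∞}, x = 0 → y ≠ ⊤ → epow (x * y) q = epow x q * epow y q := by
    intro x y hx hy
    subst hx
    rcases le_or_gt q 0 with hq | hq
    · rw [zero_mul]
      have h1 : epow 0 q = ⊤ := by simp [epow, hq]
      rw [h1, ENNReal.top_mul (epow_ne_zero_of_ne_top hq hy)]
    · have h1 : epow 0 q = 0 := by
        simp only [epow, hq.not_ge, and_false, if_false]
        exact ENNReal.zero_rpow_of_pos hq
      rw [zero_mul, h1, zero_mul]
  rcases eq_or_ne a 0 with rfl | ha0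
  · exact key rfl hb
  rcases eq_or_ne b 0 with rfl | hb0
  · rw [mul_comm, mul_comm (epow a q)]; exact key rfl ha
  · have hab : a * b ≠ 0 := mul_ne_zero ha0 hb0
    simp only [epow, hab, ha0, hb0, false_and, if_false]
    exact ENNReal.mul_rpow_of_ne_zero ha0 hb0 q

lemma ediam_le_prod_left {Y Y' : Type*} [MetricSpace Y] [MetricSpace Y']
    {s : Set Y} {t : Set Y'} (ht : t.Nonempty) :
    EMetric.diam s ≤ EMetric.diam (s ×ˢ t) := by
  obtain ⟨b, hb⟩ := ht
  refine EMetric.diam_le fun x hx y hy => ?_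
  have h1 : edist x y ≤ edist ((x, b) : Y × Y') (y, b) := by
    rw [Prod.edist_eq]; exact le_max_left _ _
  exact h1.trans (EMetric.edist_le_diam_of_mem ⟨hx, hb⟩ ⟨hy, hb⟩)

lemma ediam_le_prod_right {Y Y' : Type*} [MetricSpace Y] [MetricSpace Y']
    {s : Set Y} {t : Set Y'} (hs : s.Nonempty) :
    EMetric.diam t ≤ EMetric.diam (s ×ˢ t) := by
  obtain ⟨a, ha⟩ := hs
  refine EMetric.diam_le fun x hx y hy => ?_
  have h1 : edist x y ≤ edist ((a, x) : Y × Y') (a, y) := by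
    rw [Prod.edist_eq]; exact le_max_right _ _
  exact h1.trans (EMetric.edist_le_diam_of_mem ⟨ha, hx⟩ ⟨ha, hy⟩)

lemma closedBall_prod_eq {Y Y' : Type*} [MetricSpace Y] [MetricSpace Y']
    (p : Y × Y') (r : ℝ) :
    closedBall p r = closedBall p.1 r ×ˢ closedBall p.2 r := by
  rw [closedBall_prod_same, Prod.mk.eta]

lemma diam_left_le {Y Y' : Type*} [MetricSpace Y] [MetricSpace Y']
    (p : Y × Y') {r : ℝ} (hr : 0 ≤ r) :
    diam (closedBall p.1 r) ≤ diam (closedBall p r) := by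
  have hb : EMetric.diam (closedBall p r) ≠ ⊤ := isBounded_closedBall.ediam_ne_top
  have h1 : EMetric.diam (closedBall p.1 r) ≤ EMetric.diam (closedBall p r) := by
    rw [closedBall_prod_eq]
    exact ediam_le_prod_left ⟨p.2, mem_closedBall_self hr⟩
  exact ENNReal.toReal_mono hb h1

lemma diam_right_le {Y Y' : Type*} [MetricSpace Y] [MetricSpace Y']
    (p : Y × Y') {r : ℝ} (hr : 0 ≤ r) :
    diam (closedBall p.2 r) ≤ diam (closedBall p r) := by
  have hb : EMetric.diam (closedBall p r) ≠ ⊤ := isBounded_closedBall.ediam_ne_top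
  have h1 : EMetric.diam (closedBall p.2 r) ≤ EMetric.diam (closedBall p r) := by
    rw [closedBall_prod_eq]
    exact ediam_le_prod_right ⟨p.1, mem_closedBall_self hr⟩
  exact ENNReal.toReal_mono hb h1

lemma ballWeight_empty {Y : Type*} [MetricSpace Y] [MeasurableSpace Y]
    (μ : Measure Y) (q : ℝ) (h : ℝ≥0∞ → ℝ≥0∞) :
    ballWeight μ q (hausPre h) ∅ = 0 := by
  simp [ballWeight, hausPre]

lemma bw_prod {Y Y' : Type*} [MetricSpace Y] [MeasurableSpace Y]
    [MetricSpace Y'] [MeasurableSpace Y']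
    (q : ℝ) (μ : Measure Y) [IsProbabilityMeasure μ]
    (ν : Measure Y') [IsProbabilityMeasure ν]
    {h h' : ℝ≥0∞ → ℝ≥0∞} (mh : Monotone h) (mh' : Monotone h')
    (p : Y × Y') (r : ℝ) :
    ballWeight μ q (hausPre h) (closedBall p.1 r) *
      ballWeight ν q (hausPre h') (closedBall p.2 r) ≤
      ballWeight (μ.prod ν) q (hausPre fun s => h s * h' s) (closedBall p r) := by
  rcases lt_or_ge r 0 with hr | hr
  · rw [closedBall_eq_empty.mpr hr, ballWeight_empty, zero_mul]
    exact zero_le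
  · have hne1 : (closedBall p.1 r).Nonempty := ⟨p.1, mem_closedBall_self hr⟩
    have hne2 : (closedBall p.2 r).Nonempty := ⟨p.2, mem_closedBall_self hr⟩
    rw [closedBall_prod_eq]
    rw [ballWeight, ballWeight, ballWeight, Measure.prod_prod]
    rw [hausPre, hausPre, hausPre, if_neg hne1.ne_empty, if_neg hne2.ne_empty,
      if_neg (hne1.prod hne2).ne_empty]
    rw [epow_mul_eq q (measure_ne_top μ _) (measure_ne_top ν _)]
    have d1 : EMetric.diam (closedBall p.1 r) ≤
        EMetric.diam (closedBall p.1 r ×ˢ closedBall p.2 r) := ediam_le_prod_left hne2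
    have d2 : EMetric.diam (closedBall p.2 r) ≤
        EMetric.diam (closedBall p.1 r ×ˢ closedBall p.2 r) := ediam_le_prod_right hne1
    calc epow (μ (closedBall p.1 r)) q * h (EMetric.diam (closedBall p.1 r)) *
          (epow (ν (closedBall p.2 r)) q * h' (EMetric.diam (closedBall p.2 r)))
        = epow (μ (closedBall p.1 r)) q * epow (ν (closedBall p.2 r)) q *
          (h (EMetric.diam (closedBall p.1 r)) * h' (EMetric.diam (closedBall p.2 r))) := by
          ring
      _ ≤ epow (μ (closedBall p.1 r)) q * epow (ν (closedBall p.2 r)) q *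
          (h (EMetric.diam (closedBall p.1 r ×ˢ closedBall p.2 r)) *
            h' (EMetric.diam (closedBall p.1 r ×ˢ closedBall p.2 r))) :=
          mul_le_mul_right (mul_le_mul' (mh d1) (mh' d2)) _

lemma Hd_anti {Y : Type*} [MetricSpace Y] [MeasurableSpace Y]
    (μ : Measure Y) (q : ℝ) (ξ : Set Y → ℝ≥0∞) {δ δ' : ℝ} (hδ : δ ≤ δ') (E : Set Y) :
    Hd μ q ξ δ' E ≤ Hd μ q ξ δ E := by
  rw [Hd, Hd]
  split_ifs with hE
  · exact le_refl 0
  · refine le_iInf fun c => le_iInf fun r => le_iInf fun hc => ?_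
    exact iInf_le_of_le c (iInf_le_of_le r (iInf_le_of_le
      ⟨hc.1, fun i => le_trans (hc.2.1 i) (by linarith), hc.2.2⟩ le_rfl))

lemma Wd_anti {Y : Type*} [MetricSpace Y] [MeasurableSpace Y]
    (μ : Measure Y) (q : ℝ) (ξ : Set Y → ℝ≥0∞) {δ δ' : ℝ} (hδ : δ ≤ δ') (E : Set Y) :
    Wd μ q ξ δ' E ≤ Wd μ q ξ δ E := by
  rw [Wd, Wd]
  split_ifs with hE
  · exact le_refl 0
  · refine le_iInf fun w => le_iInf fun c => le_iInf fun r => le_iInf fun hc => ?_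
    exact iInf_le_of_le w (iInf_le_of_le c (iInf_le_of_le r (iInf_le_of_le
      ⟨hc.1, fun i => le_trans (hc.2.1 i) (by linarith), hc.2.2⟩ le_rfl)))

section Key

variable {Y Y' : Type*} [MetricSpace Y] [MeasurableSpace Y]
  [MetricSpace Y'] [MeasurableSpace Y']
  (q : ℝ) (μ : Measure Y) [IsProbabilityMeasure μ]
  (ν : Measure Y') [IsProbabilityMeasure ν]
  {h h' : ℝ≥0∞ → ℝ≥0∞}

lemma key3 (mh : Monotone h) (mh' : Monotone h')
    {δ : ℝ} (hδ : 0 < δ) (A : Set Y) (B : Set Y') :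
    Wd μ q (hausPre h) δ A * Hd ν q (hausPre h') δ B ≤
      Hd (μ.prod ν) q (hausPre fun s => h s * h' s) δ (A ×ˢ B) := by
  rcases eq_or_ne A ∅ with rfl | hA
  · rw [Wd, if_pos rfl, zero_mul]; exact zero_le
  rcases eq_or_ne B ∅ with rfl | hB
  · have hz : Hd ν q (hausPre h') δ (∅ : Set Y') = 0 := by rw [Hd, if_pos rfl]
    rw [hz, mul_zero]; exact zero_le
  have hABne : A ×ˢ B ≠ ∅ :=
    ((Set.nonempty_iff_ne_empty.mpr hA).prod (Set.nonempty_iff_ne_empty.mpr hB)).ne_empty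
  conv_rhs => rw [Hd, if_neg hABne]
  refine le_iInf fun c => le_iInf fun rr => le_iInf fun hcov => ?_
  obtain ⟨hcenters, hdiam, hcover⟩ := hcov
  set bwμ : ℕ → ℝ≥0∞ := fun i => ballWeight μ q (hausPre h) (closedBall (c i).1 (rr i))
    with hbwμ
  set bwν : ℕ → ℝ≥0∞ := fun i => ballWeight ν q (hausPre h') (closedBall (c i).2 (rr i))
    with hbwν
  refine aux_mul_le fun r hr0 hrB => ?_
  have hr0' : (r : ℝ≥0∞) ≠ 0 := by exact_mod_cast hr0.ne'
  -- For every x ∈ A, the balls `Bb i` with `x ∈ Ba i` cover `B`.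
  have coverB : ∀ x ∈ A, Hd ν q (hausPre h') δ B ≤
      ∑' i, (if x ∈ closedBall (c i).1 (rr i) then bwν i else 0) := by
    intro x hx
    set rx : ℕ → ℝ := fun i => if x ∈ closedBall (c i).1 (rr i) then rr i else -1 with hrx
    have hcB : IsCenteredCover B δ (fun i => (c i).2) rx := by
      refine ⟨fun i => (hcenters i).2, ?_, ?_⟩
      · intro i
        by_cases hxi : x ∈ closedBall (c i).1 (rr i)
        · have hri : 0 ≤ rr i := le_trans dist_nonneg (mem_closedBall.mp hxi)
          have hrxi : rx i = rr i := if_pos hxi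
          rw [hrxi]
          exact (diam_right_le (c i) hri).trans (hdiam i)
        · have hrxi : rx i = -1 := if_neg hxi
          rw [hrxi, closedBall_eq_empty.mpr (by norm_num : (-1 : ℝ) < 0), diam_empty]
          linarith
      · intro y hy
        obtain ⟨i, hmem⟩ := Set.mem_iUnion.mp (hcover (Set.mk_mem_prod hx hy))
        rw [closedBall_prod_eq] at hmem
        refine Set.mem_iUnion.mpr ⟨i, ?_⟩
        have hrxi : rx i = rr i := if_pos hmem.1
        rw [hrxi]
        exact hmem.2
    have h1 : Hd ν q (hausPre h') δ B ≤
        ∑' i, ballWeight ν q (hausPre h') (closedBall (c i).2 (rx i)) := by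
      rw [Hd, if_neg hB]
      exact iInf_le_of_le _ (iInf_le_of_le rx (iInf_le_of_le hcB le_rfl))
    refine h1.trans_eq (tsum_congr fun i => ?_)
    by_cases hxi : x ∈ closedBall (c i).1 (rr i)
    · have hrxi : rx i = rr i := if_pos hxi
      rw [hrxi, if_pos hxi]
    · have hrxi : rx i = -1 := if_neg hxi
      rw [hrxi, closedBall_eq_empty.mpr (by norm_num : (-1 : ℝ) < 0), if_neg hxi,
        ballWeight_empty]
  -- the weights
  set w : ℕ → ℝ≥0 := fun i => (min (bwν i / r) 1).toNNReal with hw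
  have wcoe : ∀ i, (w i : ℝ≥0∞) = min (bwν i / r) 1 := fun i =>
    ENNReal.coe_toNNReal (ne_top_of_le_ne_top ENNReal.one_ne_top (min_le_right _ _))
  have hwcov : IsWeightedCover A δ w (fun i => (c i).1) rr := by
    refine ⟨fun i => (hcenters i).1, ?_, ?_⟩
    · intro i
      rcases le_or_gt 0 (rr i) with hri | hri
      · exact (diam_left_le (c i) hri).trans (hdiam i)
      · rw [closedBall_eq_empty.mpr hri, diam_empty]; linarith
    · intro x hx
      have hS : (r : ℝ≥0∞) <
          ∑' i, (if x ∈ closedBall (c i).1 (rr i) then bwν i else 0) :=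
        hrB.trans_le (coverB x hx)
      by_cases hone : ∃ i, x ∈ closedBall (c i).1 (rr i) ∧ 1 ≤ bwν i / r
      · obtain ⟨i, hxi, h1⟩ := hone
        have hterm : (1 : ℝ≥0∞) =
            (if x ∈ closedBall (c i).1 (rr i) then (w i : ℝ≥0∞) else 0) := by
          rw [if_pos hxi, wcoe, min_eq_right h1]
        exact hterm.le.trans (ENNReal.le_tsum i)
      · push_neg at hone
        have hterm : ∀ i,
            (if x ∈ closedBall (c i).1 (rr i) then bwν i else 0) * (r : ℝ≥0∞)⁻¹ ≤
            (if x ∈ closedBall (c i).1 (rr i) then (w i : ℝ≥0∞) else 0) := by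
          intro i
          by_cases hxi : x ∈ closedBall (c i).1 (rr i)
          · rw [if_pos hxi, if_pos hxi, wcoe, min_eq_left (hone i hxi).le,
              div_eq_mul_inv]
          · simp [hxi]
        calc (1 : ℝ≥0∞)
            ≤ (∑' i, (if x ∈ closedBall (c i).1 (rr i) then bwν i else 0)) / r := by
              rw [ENNReal.le_div_iff_mul_le (Or.inl hr0') (Or.inl ENNReal.coe_ne_top),
                one_mul]
              exact hS.le
          _ = ∑' i, (if x ∈ closedBall (c i).1 (rr i) then bwν i else 0) * (r : ℝ≥0∞)⁻¹ := by
              rw [div_eq_mul_inv, ENNReal.tsum_mul_right]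
          _ ≤ _ := ENNReal.tsum_le_tsum hterm
  have hWd : Wd μ q (hausPre h) δ A ≤ ∑' i, (w i : ℝ≥0∞) * bwμ i := by
    rw [Wd, if_neg hA]
    exact iInf_le_of_le w (iInf_le_of_le _ (iInf_le_of_le rr (iInf_le_of_le hwcov le_rfl)))
  have hchain : ∑' i, (w i : ℝ≥0∞) * bwμ i ≤
      (∑' i, ballWeight (μ.prod ν) q (hausPre fun s => h s * h' s)
        (closedBall (c i) (rr i))) / r := by
    calc ∑' i, (w i : ℝ≥0∞) * bwμ i
        ≤ ∑' i, (bwμ i * bwν i) * (r : ℝ≥0∞)⁻¹ := by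
          refine ENNReal.tsum_le_tsum fun i => ?_
          rw [wcoe]
          calc min (bwν i / r) 1 * bwμ i ≤ (bwν i / r) * bwμ i :=
              mul_le_mul_left (min_le_left _ _) _
            _ = (bwμ i * bwν i) * (r : ℝ≥0∞)⁻¹ := by rw [div_eq_mul_inv]; ring
      _ = (∑' i, bwμ i * bwν i) * (r : ℝ≥0∞)⁻¹ := ENNReal.tsum_mul_right
      _ ≤ _ := by
          rw [div_eq_mul_inv]
          exact mul_le_mul_left
            (ENNReal.tsum_le_tsum fun i => bw_prod q μ ν mh mh' (c i) (rr i)) _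
  exact (ENNReal.le_div_iff_mul_le (Or.inl hr0') (Or.inl ENNReal.coe_ne_top)).mp
    (hWd.trans hchain)

lemma key3' (mh : Monotone h) (mh' : Monotone h')
    {δ : ℝ} (hδ : 0 < δ) (A : Set Y) (B : Set Y') :
    Hd μ q (hausPre h) δ A * Wd ν q (hausPre h') δ B ≤
      Hd (μ.prod ν) q (hausPre fun s => h s * h' s) δ (A ×ˢ B) := by
  rcases eq_or_ne A ∅ with rfl | hA
  · have hz : Hd μ q (hausPre h) δ (∅ : Set Y) = 0 := by rw [Hd, if_pos rfl]
    rw [hz, zero_mul]; exact zero_le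
  rcases eq_or_ne B ∅ with rfl | hB
  · rw [Wd, if_pos rfl, mul_zero]; exact zero_le
  have hABne : A ×ˢ B ≠ ∅ :=
    ((Set.nonempty_iff_ne_empty.mpr hA).prod (Set.nonempty_iff_ne_empty.mpr hB)).ne_empty
  conv_rhs => rw [Hd, if_neg hABne]
  refine le_iInf fun c => le_iInf fun rr => le_iInf fun hcov => ?_
  obtain ⟨hcenters, hdiam, hcover⟩ := hcov
  set bwμ : ℕ → ℝ≥0∞ := fun i => ballWeight μ q (hausPre h) (closedBall (c i).1 (rr i))
    with hbwμ
  set bwν : ℕ → ℝ≥0∞ := fun i => ballWeight ν q (hausPre h') (closedBall (c i).2 (rr i))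
    with hbwν
  refine aux_mul_le' fun r hr0 hrA => ?_
  have hr0' : (r : ℝ≥0∞) ≠ 0 := by exact_mod_cast hr0.ne'
  -- For every y ∈ B, the balls `Ba i` with `y ∈ Bb i` cover `A`.
  have coverA : ∀ y ∈ B, Hd μ q (hausPre h) δ A ≤
      ∑' i, (if y ∈ closedBall (c i).2 (rr i) then bwμ i else 0) := by
    intro y hy
    set rx : ℕ → ℝ := fun i => if y ∈ closedBall (c i).2 (rr i) then rr i else -1 with hrx
    have hcA : IsCenteredCover A δ (fun i => (c i).1) rx := by
      refine ⟨fun i => (hcenters i).1, ?_, ?_⟩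
      · intro i
        by_cases hyi : y ∈ closedBall (c i).2 (rr i)
        · have hri : 0 ≤ rr i := le_trans dist_nonneg (mem_closedBall.mp hyi)
          have hrxi : rx i = rr i := if_pos hyi
          rw [hrxi]
          exact (diam_left_le (c i) hri).trans (hdiam i)
        · have hrxi : rx i = -1 := if_neg hyi
          rw [hrxi, closedBall_eq_empty.mpr (by norm_num : (-1 : ℝ) < 0), diam_empty]
          linarith
      · intro x hx
        obtain ⟨i, hmem⟩ := Set.mem_iUnion.mp (hcover (Set.mk_mem_prod hx hy))
        rw [closedBall_prod_eq] at hmem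
        refine Set.mem_iUnion.mpr ⟨i, ?_⟩
        have hrxi : rx i = rr i := if_pos hmem.2
        rw [hrxi]
        exact hmem.1
    have h1 : Hd μ q (hausPre h) δ A ≤
        ∑' i, ballWeight μ q (hausPre h) (closedBall (c i).1 (rx i)) := by
      rw [Hd, if_neg hA]
      exact iInf_le_of_le _ (iInf_le_of_le rx (iInf_le_of_le hcA le_rfl))
    refine h1.trans_eq (tsum_congr fun i => ?_)
    by_cases hyi : y ∈ closedBall (c i).2 (rr i)
    · have hrxi : rx i = rr i := if_pos hyi
      rw [hrxi, if_pos hyi]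
    · have hrxi : rx i = -1 := if_neg hyi
      rw [hrxi, closedBall_eq_empty.mpr (by norm_num : (-1 : ℝ) < 0), if_neg hyi,
        ballWeight_empty]
  -- the weights
  set w : ℕ → ℝ≥0 := fun i => (min (bwμ i / r) 1).toNNReal with hw
  have wcoe : ∀ i, (w i : ℝ≥0∞) = min (bwμ i / r) 1 := fun i =>
    ENNReal.coe_toNNReal (ne_top_of_le_ne_top ENNReal.one_ne_top (min_le_right _ _))
  have hwcov : IsWeightedCover B δ w (fun i => (c i).2) rr := by
    refine ⟨fun i => (hcenters i).2, ?_, ?_⟩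
    · intro i
      rcases le_or_gt 0 (rr i) with hri | hri
      · exact (diam_right_le (c i) hri).trans (hdiam i)
      · rw [closedBall_eq_empty.mpr hri, diam_empty]; linarith
    · intro y hy
      have hS : (r : ℝ≥0∞) <
          ∑' i, (if y ∈ closedBall (c i).2 (rr i) then bwμ i else 0) :=
        hrA.trans_le (coverA y hy)
      by_cases hone : ∃ i, y ∈ closedBall (c i).2 (rr i) ∧ 1 ≤ bwμ i / r
      · obtain ⟨i, hyi, h1⟩ := hone
        have hterm : (1 : ℝ≥0∞) =
            (if y ∈ closedBall (c i).2 (rr i) then (w i : ℝ≥0∞) else 0) := by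
          rw [if_pos hyi, wcoe, min_eq_right h1]
        exact hterm.le.trans (ENNReal.le_tsum i)
      · push_neg at hone
        have hterm : ∀ i,
            (if y ∈ closedBall (c i).2 (rr i) then bwμ i else 0) * (r : ℝ≥0∞)⁻¹ ≤
            (if y ∈ closedBall (c i).2 (rr i) then (w i : ℝ≥0∞) else 0) := by
          intro i
          by_cases hyi : y ∈ closedBall (c i).2 (rr i)
          · rw [if_pos hyi, if_pos hyi, wcoe, min_eq_left (hone i hyi).le,
              div_eq_mul_inv]
          · simp [hyi]
        calc (1 : ℝ≥0∞)
            ≤ (∑' i, (if y ∈ closedBall (c i).2 (rr i) then bwμ i else 0)) / r := by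
              rw [ENNReal.le_div_iff_mul_le (Or.inl hr0') (Or.inl ENNReal.coe_ne_top),
                one_mul]
              exact hS.le
          _ = ∑' i, (if y ∈ closedBall (c i).2 (rr i) then bwμ i else 0) * (r : ℝ≥0∞)⁻¹ := by
              rw [div_eq_mul_inv, ENNReal.tsum_mul_right]
          _ ≤ _ := ENNReal.tsum_le_tsum hterm
  have hWd : Wd ν q (hausPre h') δ B ≤ ∑' i, (w i : ℝ≥0∞) * bwν i := by
    rw [Wd, if_neg hB]
    exact iInf_le_of_le w (iInf_le_of_le _ (iInf_le_of_le rr (iInf_le_of_le hwcov le_rfl)))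
  have hchain : ∑' i, (w i : ℝ≥0∞) * bwν i ≤
      (∑' i, ballWeight (μ.prod ν) q (hausPre fun s => h s * h' s)
        (closedBall (c i) (rr i))) / r := by
    calc ∑' i, (w i : ℝ≥0∞) * bwν i
        ≤ ∑' i, (bwμ i * bwν i) * (r : ℝ≥0∞)⁻¹ := by
          refine ENNReal.tsum_le_tsum fun i => ?_
          rw [wcoe]
          calc min (bwμ i / r) 1 * bwν i ≤ (bwμ i / r) * bwν i :=
              mul_le_mul_left (min_le_left _ _) _
            _ = (bwμ i * bwν i) * (r : ℝ≥0∞)⁻¹ := by rw [div_eq_mul_inv]; ring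
      _ = (∑' i, bwμ i * bwν i) * (r : ℝ≥0∞)⁻¹ := ENNReal.tsum_mul_right
      _ ≤ _ := by
          rw [div_eq_mul_inv]
          exact mul_le_mul_left
            (ENNReal.tsum_le_tsum fun i => bw_prod q μ ν mh mh' (c i) (rr i)) _
  have hfin := (ENNReal.le_div_iff_mul_le (Or.inl hr0') (Or.inl ENNReal.coe_ne_top)).mp
    (hWd.trans hchain)
  rw [mul_comm] at hfin
  exact hfin

lemma W0H0 (mh : Monotone h) (mh' : Monotone h') (A : Set Y) (B : Set Y') :
    W0 μ q (hausPre h) A * H0 ν q (hausPre h') B ≤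
      H0 (μ.prod ν) q (hausPre fun s => h s * h' s) (A ×ˢ B) := by
  rw [W0, ENNReal.iSup_mul]
  refine iSup_le fun δ1 => ?_
  rw [ENNReal.iSup_mul]
  refine iSup_le fun hδ1 => ?_
  rw [H0, ENNReal.mul_iSup]
  refine iSup_le fun δ2 => ?_
  rw [ENNReal.mul_iSup]
  refine iSup_le fun hδ2 => ?_
  have hδ : 0 < min δ1 δ2 := lt_min hδ1 hδ2
  calc Wd μ q (hausPre h) δ1 A * Hd ν q (hausPre h') δ2 B
      ≤ Wd μ q (hausPre h) (min δ1 δ2) A * Hd ν q (hausPre h') (min δ1 δ2) B :=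
        mul_le_mul' (Wd_anti μ q _ (min_le_left _ _) A) (Hd_anti ν q _ (min_le_right _ _) B)
    _ ≤ Hd (μ.prod ν) q (hausPre fun s => h s * h' s) (min δ1 δ2) (A ×ˢ B) :=
        key3 q μ ν mh mh' hδ A B
    _ ≤ H0 (μ.prod ν) q (hausPre fun s => h s * h' s) (A ×ˢ B) :=
        le_iSup₂ (f := fun (δ : ℝ) (_ : 0 < δ) =>
          Hd (μ.prod ν) q (hausPre fun s => h s * h' s) δ (A ×ˢ B)) (min δ1 δ2) hδ

lemma H0W0 (mh : Monotone h) (mh' : Monotone h') (A : Set Y) (B : Set Y') :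
    H0 μ q (hausPre h) A * W0 ν q (hausPre h') B ≤
      H0 (μ.prod ν) q (hausPre fun s => h s * h' s) (A ×ˢ B) := by
  rw [H0, ENNReal.iSup_mul]
  refine iSup_le fun δ1 => ?_
  rw [ENNReal.iSup_mul]
  refine iSup_le fun hδ1 => ?_
  rw [W0, ENNReal.mul_iSup]
  refine iSup_le fun δ2 => ?_
  rw [ENNReal.mul_iSup]
  refine iSup_le fun hδ2 => ?_
  have hδ : 0 < min δ1 δ2 := lt_min hδ1 hδ2
  calc Hd μ q (hausPre h) δ1 A * Wd ν q (hausPre h') δ2 B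
      ≤ Hd μ q (hausPre h) (min δ1 δ2) A * Wd ν q (hausPre h') (min δ1 δ2) B :=
        mul_le_mul' (Hd_anti μ q _ (min_le_left _ _) A) (Wd_anti ν q _ (min_le_right _ _) B)
    _ ≤ Hd (μ.prod ν) q (hausPre fun s => h s * h' s) (min δ1 δ2) (A ×ˢ B) :=
        key3' q μ ν mh mh' hδ A B
    _ ≤ H0 (μ.prod ν) q (hausPre fun s => h s * h' s) (A ×ˢ B) :=
        le_iSup₂ (f := fun (δ : ℝ) (_ : 0 < δ) =>
          Hd (μ.prod ν) q (hausPre fun s => h s * h' s) δ (A ×ˢ B)) (min δ1 δ2) hδ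

lemma WMHM (mh : Monotone h) (mh' : Monotone h') (E : Set Y) (F : Set Y') :
    WM μ q (hausPre h) E * HM ν q (hausPre h') F ≤
      HM (μ.prod ν) q (hausPre fun s => h s * h' s) (E ×ˢ F) := by
  rw [WM, ENNReal.iSup_mul]
  refine iSup_le fun A => ?_
  rw [ENNReal.iSup_mul]
  refine iSup_le fun hA => ?_
  rw [HM, ENNReal.mul_iSup]
  refine iSup_le fun B => ?_
  rw [ENNReal.mul_iSup]
  refine iSup_le fun hB => ?_
  refine (W0H0 q μ ν mh mh' A B).trans ?_
  exact le_iSup₂ (f := fun (G : Set (Y × Y')) (_ : G ⊆ E ×ˢ F) =>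
    H0 (μ.prod ν) q (hausPre fun s => h s * h' s) G) (A ×ˢ B) (Set.prod_mono hA hB)

lemma HMWM (mh : Monotone h) (mh' : Monotone h') (E : Set Y) (F : Set Y') :
    HM μ q (hausPre h) E * WM ν q (hausPre h') F ≤
      HM (μ.prod ν) q (hausPre fun s => h s * h' s) (E ×ˢ F) := by
  rw [HM, ENNReal.iSup_mul]
  refine iSup_le fun A => ?_
  rw [ENNReal.iSup_mul]
  refine iSup_le fun hA => ?_
  rw [WM, ENNReal.mul_iSup]
  refine iSup_le fun B => ?_
  rw [ENNReal.mul_iSup]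
  refine iSup_le fun hB => ?_
  refine (H0W0 q μ ν mh mh' A B).trans ?_
  exact le_iSup₂ (f := fun (G : Set (Y × Y')) (_ : G ⊆ E ×ˢ F) =>
    H0 (μ.prod ν) q (hausPre fun s => h s * h' s) G) (A ×ˢ B) (Set.prod_mono hA hB)

end Key

theorem stmt17 (q : ℝ) (μ : Measure X) [IsProbabilityMeasure μ]
    (ν : Measure X') [IsProbabilityMeasure ν]
    (h h' : ℝ≥0∞ → ℝ≥0∞) (hh : IsHausdorffFunction h) (hh' : IsHausdorffFunction h')
    (E : Set X) (F : Set X')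
    (hreg : WM μ q (hausPre h) E = HM μ q (hausPre h) E ∨
            WM ν q (hausPre h') F = HM ν q (hausPre h') F) :
    HM μ q (hausPre h) E * HM ν q (hausPre h') F ≤
      HM (μ.prod ν) q (hausPre fun r => h r * h' r) (E ×ˢ F) := by
  rcases hreg with hr | hr
  · rw [← hr]
    exact WMHM q μ ν hh.1 hh'.1 E F
  · rw [← hr]
    exact HMWM q μ ν hh.1 hh'.1 E F

end Thms
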